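/- Let $\pi < \beta < 2\pi$, let $v_0(r) = r^{\pi/\beta} - r^2$ on $(0,1)$, and let $v_\epsilon$ be as in the annular-sector example: $v_\epsilon(r) = \frac{\epsilon^{-\pi/\beta} - \epsilon^2}{\epsilon^{-\pi/\beta} - \epsilon^{\pi/\beta}} r^{\pi/\beta} + \frac{\epsilon^2 - \epsilon^{\pi/\beta}}{\epsilon^{-\pi/\beta} - \epsilon^{\pi/\beta}} r^{-\pi/\beta} - r^2$ on $(\epsilon, 1)$, extended by zero on $(0,\epsilon]$. Then there exists $A > 0$ such that $\left(\int_0^1 \left[(v_\epsilon' - v_0')^2 + \frac{\pi^2}{\beta^2 r^2}(v_\epsilon - v_0)^2\right] r\, dr\right)^{1/2} = A\,\epsilon^{\pi/\beta}(1 + o(1))$ as $\epsilon \to 0^+$. -/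

import Mathlib

open Set Filter MeasureTheory

noncomputable section

namespace S14


def c1 (μ ε : ℝ) : ℝ := (ε ^ (-μ) - ε ^ 2) / (ε ^ (-μ) - ε ^ μ)
def c2 (μ ε : ℝ) : ℝ := (ε ^ 2 - ε ^ μ) / (ε ^ (-μ) - ε ^ μ)
def aa (μ ε : ℝ) : ℝ := (ε ^ μ - ε ^ 2) / (ε ^ (-μ) - ε ^ μ)
def V0 (μ : ℝ) : ℝ → ℝ := fun r => r ^ μ - r ^ 2
def V (μ ε : ℝ) : ℝ → ℝ := fun r =>
  if r ≤ ε then 0 else c1 μ ε * r ^ μ + c2 μ ε * r ^ (-μ) - r ^ 2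

variable {μ ε : ℝ}

lemma Dpos (hμ : 0 < μ) (hε0 : 0 < ε) (hε1 : ε < 1) : 0 < ε ^ (-μ) - ε ^ μ := by
  have h1 : ε ^ μ < 1 := Real.rpow_lt_one hε0.le hε1 hμ
  have h2 : 1 < ε ^ (-μ) := by
    rw [Real.rpow_neg hε0.le]
    have := Real.rpow_pos_of_pos hε0 μ
    rw [lt_inv_comm₀ one_pos this] at *
    simpa using h1
  linarith

lemma c2_eq : c2 μ ε = -(aa μ ε) := by
  rw [c2, aa, ← neg_div]; ring_nf

lemma c1_eq (hμ : 0 < μ) (hε0 : 0 < ε) (hε1 : ε < 1) : c1 μ ε = 1 + aa μ ε := by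
  have hD := (Dpos hμ hε0 hε1).ne'
  rw [c1, aa]
  field_simp
  ring


lemma derivV0 (hr : 0 < (r:ℝ)) : deriv (V0 μ) r = μ * r ^ (μ - 1) - 2 * r := by
  have h := (Real.hasDerivAt_rpow_const (x := r) (p := μ) (Or.inl hr.ne')).sub
    (hasDerivAt_pow 2 r)
  have := h.deriv
  rw [show V0 μ = ((fun x : ℝ => x ^ μ) - fun x => x ^ 2) from rfl]
  simpa using this

lemma derivV_lt (hr : (r:ℝ) < ε) : deriv (V μ ε) r = 0 := by
  have heq : V μ ε =ᶠ[nhds r] fun _ => (0:ℝ) := by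
    filter_upwards [Iio_mem_nhds hr] with x hx
    simp [V, le_of_lt (show x < ε from hx)]
  rw [heq.deriv_eq, deriv_const]

lemma derivV_gt (hε0 : 0 < ε) (hr : ε < (r:ℝ)) :
    deriv (V μ ε) r = c1 μ ε * (μ * r ^ (μ - 1)) + c2 μ ε * (-μ * r ^ (-μ - 1)) - 2 * r := by
  have hr0 : 0 < r := hε0.trans hr
  have heq : V μ ε =ᶠ[nhds r] fun x => c1 μ ε * x ^ μ + c2 μ ε * x ^ (-μ) - x ^ 2 := by
    filter_upwards [Ioi_mem_nhds hr] with x hx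
    simp [V, not_le.mpr (show ε < x from hx)]
  rw [heq.deriv_eq]
  have ha := (Real.hasDerivAt_rpow_const (x := r) (p := μ) (Or.inl hr0.ne')).const_mul (c1 μ ε)
  have hb := (Real.hasDerivAt_rpow_const (x := r) (p := -μ) (Or.inl hr0.ne')).const_mul (c2 μ ε)
  have hc := hasDerivAt_pow 2 r
  have h := (ha.add hb).sub hc
  rw [show (fun x : ℝ => c1 μ ε * x ^ μ + c2 μ ε * x ^ (-μ) - x ^ 2)
    = (((fun y : ℝ => c1 μ ε * y ^ μ) + fun y => c2 μ ε * y ^ (-μ)) - fun x => x ^ 2) from rfl,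
    h.deriv]
  push_cast
  ring


lemma key1 (hr0 : 0 < (r:ℝ)) (hrε : r < ε) :
    ((deriv (V μ ε) r - deriv (V0 μ) r) ^ 2 + μ ^ 2 / r ^ 2 * (V μ ε r - V0 μ r) ^ 2) * r
      = 2 * μ ^ 2 * r ^ (2 * μ - 1) - 2 * μ * (2 + μ) * r ^ (μ + 1)
        + (4 + μ ^ 2) * r ^ (3:ℝ) := by
  have hVr : V μ ε r = 0 := by simp [V, hrε.le]
  rw [derivV_lt hrε, derivV0 hr0, hVr]
  have hrne : r ≠ 0 := hr0.ne'
  have e1 : r ^ (μ - 1) = r ^ μ / r := by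
    rw [Real.rpow_sub hr0, Real.rpow_one]
  have e2 : r ^ (2 * μ - 1) = (r ^ μ) ^ 2 / r := by
    rw [Real.rpow_sub hr0, Real.rpow_one, two_mul, Real.rpow_add hr0, sq]
  have e3 : r ^ (μ + 1) = r ^ μ * r := by
    rw [Real.rpow_add hr0, Real.rpow_one]
  have e4 : r ^ (3:ℝ) = r ^ (3:ℕ) := Real.rpow_natCast r 3
  rw [e1, e2, e3, e4, V0]
  field_simp
  ring

lemma key2 (hμ : 0 < μ) (hε0 : 0 < ε) (hε1 : ε < 1) (hr : ε < (r:ℝ)) :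
    ((deriv (V μ ε) r - deriv (V0 μ) r) ^ 2 + μ ^ 2 / r ^ 2 * (V μ ε r - V0 μ r) ^ 2) * r
      = 2 * μ ^ 2 * (aa μ ε) ^ 2 * (r ^ (2 * μ - 1) + r ^ (-(2 * μ) - 1)) := by
  have hr0 : 0 < r := hε0.trans hr
  have hrne : r ≠ 0 := hr0.ne'
  have hVr : V μ ε r = c1 μ ε * r ^ μ + c2 μ ε * r ^ (-μ) - r ^ 2 := by
    simp [V, not_le.mpr hr]
  rw [derivV_gt hε0 hr, derivV0 hr0, hVr, c1_eq hμ hε0 hε1, c2_eq, V0]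
  have hsne : r ^ μ ≠ 0 := (Real.rpow_pos_of_pos hr0 μ).ne'
  have e1 : r ^ (μ - 1) = r ^ μ / r := by
    rw [Real.rpow_sub hr0, Real.rpow_one]
  have e2 : r ^ (2 * μ - 1) = (r ^ μ) ^ 2 / r := by
    rw [Real.rpow_sub hr0, Real.rpow_one, two_mul, Real.rpow_add hr0, sq]
  have e3 : r ^ (-μ - 1) = ((r ^ μ) * r)⁻¹ := by
    rw [show -μ - 1 = -(μ + 1) by ring, Real.rpow_neg hr0.le, Real.rpow_add hr0, Real.rpow_one]
  have e4 : r ^ (-(2 * μ) - 1) = ((r ^ μ) ^ 2 * r)⁻¹ := by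
    rw [show -(2*μ) - 1 = -(2*μ + 1) by ring, Real.rpow_neg hr0.le, Real.rpow_add hr0,
      Real.rpow_one, two_mul, Real.rpow_add hr0, sq]
  have e5 : r ^ (-μ) = (r ^ μ)⁻¹ := by rw [Real.rpow_neg hr0.le]
  rw [e1, e2, e3, e4, e5]
  field_simp
  ring


lemma integral_value (hμ2 : 1/2 < μ) (hμ1 : μ < 1) (hε0 : 0 < ε) (hε1 : ε < 1) :
    ∫ r in Ioo (0:ℝ) 1,
        ((deriv (V μ ε) r - deriv (V0 μ) r) ^ 2 + μ ^ 2 / r ^ 2 * (V μ ε r - V0 μ r) ^ 2) * r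
      = μ * ε ^ (2*μ) - 2*μ * ε ^ (μ+2) + (4 + μ^2)/4 * ε ^ (4:ℝ)
        + μ * (aa μ ε)^2 * (ε ^ (-(2*μ)) - ε ^ (2*μ)) := by
  have hμ0 : 0 < μ := by linarith
  set f : ℝ → ℝ := fun r =>
    ((deriv (V μ ε) r - deriv (V0 μ) r) ^ 2 + μ ^ 2 / r ^ 2 * (V μ ε r - V0 μ r) ^ 2) * r
    with hf
  set h1 : ℝ → ℝ := fun r => 2 * μ ^ 2 * r ^ (2 * μ - 1) - 2 * μ * (2 + μ) * r ^ (μ + 1)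
        + (4 + μ ^ 2) * r ^ (3:ℝ) with hh1
  set h2 : ℝ → ℝ := fun r => 2 * μ ^ 2 * (aa μ ε) ^ 2 * (r ^ (2 * μ - 1) + r ^ (-(2 * μ) - 1))
    with hh2
  have hne : ∀ᵐ (r:ℝ), r ≠ ε := by
    refine MeasureTheory.ae_iff.mpr ?_
    simp only [not_not]
    rw [show {a : ℝ | a = ε} = {ε} by ext; simp]
    exact Real.volume_singleton
  -- interval integrability of h1, h2
  have hint1 : IntervalIntegrable h1 volume 0 ε := by
    exact (((intervalIntegral.intervalIntegrable_rpow' (by linarith)).const_mul _).sub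
      ((intervalIntegral.intervalIntegrable_rpow' (by linarith)).const_mul _)).add
      ((intervalIntegral.intervalIntegrable_rpow' (by norm_num)).const_mul _)
  have h0notin : (0:ℝ) ∉ uIcc ε 1 := by
    rw [Set.uIcc_of_le hε1.le]
    simp only [Set.mem_Icc, not_and]
    intro h; linarith
  have hint2 : IntervalIntegrable h2 volume ε 1 := by
    exact (((intervalIntegral.intervalIntegrable_rpow (Or.inr h0notin)).add
      (intervalIntegral.intervalIntegrable_rpow (Or.inr h0notin))).const_mul _)
  -- a.e. equality
  have hae1 : ∀ᵐ x, x ∈ Set.uIoc (0:ℝ) ε → f x = h1 x := by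
    rw [uIoc_of_le hε0.le]
    filter_upwards [hne] with r hrne hr
    exact key1 hr.1 (lt_of_le_of_ne hr.2 hrne)
  have hae2 : ∀ᵐ x, x ∈ Set.uIoc ε (1:ℝ) → f x = h2 x := by
    rw [uIoc_of_le hε1.le]
    filter_upwards with r hr
    exact key2 hμ0 hε0 hε1 hr.1
  have hfint1 : IntervalIntegrable f volume 0 ε := by
    rw [intervalIntegrable_iff] at hint1 ⊢
    refine hint1.congr ?_
    rw [Filter.EventuallyEq, ae_restrict_iff' measurableSet_uIoc]
    filter_upwards [hae1] with x hx hmem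
    exact (hx hmem).symm
  have hfint2 : IntervalIntegrable f volume ε 1 := by
    rw [intervalIntegrable_iff] at hint2 ⊢
    refine hint2.congr ?_
    rw [Filter.EventuallyEq, ae_restrict_iff' measurableSet_uIoc]
    filter_upwards [hae2] with x hx hmem
    exact (hx hmem).symm
  -- antiderivatives
  have hderiv1 : ∀ x ∈ uIcc (0:ℝ) ε,
      HasDerivAt (fun r : ℝ => μ * r ^ (2*μ) - 2*μ * r ^ (μ+2) + (4 + μ^2)/4 * r ^ (4:ℝ))
        (h1 x) x := by
    intro x _
    have d1 : HasDerivAt (fun r : ℝ => r ^ (2*μ)) (2*μ * x ^ (2*μ - 1)) x :=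
      Real.hasDerivAt_rpow_const (Or.inr (by linarith))
    have d2 : HasDerivAt (fun r : ℝ => r ^ (μ+2)) ((μ+2) * x ^ (μ+2-1)) x :=
      Real.hasDerivAt_rpow_const (Or.inr (by linarith))
    have d3 : HasDerivAt (fun r : ℝ => r ^ (4:ℝ)) ((4:ℝ) * x ^ ((4:ℝ)-1)) x :=
      Real.hasDerivAt_rpow_const (Or.inr (by norm_num))
    rw [show μ+2-1 = μ+1 by ring] at d2
    rw [show (4:ℝ)-1 = 3 by norm_num] at d3
    have h := ((d1.const_mul μ).sub (d2.const_mul (2*μ))).add (d3.const_mul ((4 + μ^2)/4))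
    convert h using 1
    show h1 x = _
    simp only [hh1]
    ring
    all_goals rfl
  have hderiv2 : ∀ x ∈ uIcc ε (1:ℝ),
      HasDerivAt (fun r : ℝ => μ * (aa μ ε)^2 * r ^ (2*μ) - μ * (aa μ ε)^2 * r ^ (-(2*μ)))
        (h2 x) x := by
    intro x hx
    have hx0 : x ≠ 0 := by
      rw [Set.uIcc_of_le hε1.le] at hx
      exact (lt_of_lt_of_le hε0 hx.1).ne'
    have d1 : HasDerivAt (fun r : ℝ => r ^ (2*μ)) (2*μ * x ^ (2*μ - 1)) x :=
      Real.hasDerivAt_rpow_const (Or.inl hx0)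
    have d2 : HasDerivAt (fun r : ℝ => r ^ (-(2*μ))) (-(2*μ) * x ^ (-(2*μ) - 1)) x :=
      Real.hasDerivAt_rpow_const (Or.inl hx0)
    have h := (d1.const_mul (μ * (aa μ ε)^2)).sub (d2.const_mul (μ * (aa μ ε)^2))
    convert h using 1
    show h2 x = _
    simp only [hh2]
    ring
    all_goals rfl
  -- put together
  have split : ∫ r in Ioo (0:ℝ) 1, f r = (∫ r in (0:ℝ)..ε, f r) + ∫ r in ε..(1:ℝ), f r := by
    rw [← MeasureTheory.integral_Ioc_eq_integral_Ioo,
      ← intervalIntegral.integral_of_le (by norm_num : (0:ℝ) ≤ 1),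
      ← intervalIntegral.integral_add_adjacent_intervals hfint1 hfint2]
  rw [split, intervalIntegral.integral_congr_ae hae1, intervalIntegral.integral_congr_ae hae2,
    intervalIntegral.integral_eq_sub_of_hasDerivAt hderiv1 hint1,
    intervalIntegral.integral_eq_sub_of_hasDerivAt hderiv2 hint2]
  rw [Real.zero_rpow (by positivity : (2*μ:ℝ) ≠ 0), Real.zero_rpow (by positivity : (μ+2:ℝ) ≠ 0),
    Real.zero_rpow (by norm_num : (4:ℝ) ≠ 0)]
  simp only [Real.one_rpow]
  ring


lemma ratio_eq (hμ2 : 1/2 < μ) (hμ1 : μ < 1) (hε0 : 0 < ε) (hε1 : ε < 1) :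
    (μ * ε ^ (2*μ) - 2*μ * ε ^ (μ+2) + (4 + μ^2)/4 * ε ^ (4:ℝ)
        + μ * (aa μ ε)^2 * (ε ^ (-(2*μ)) - ε ^ (2*μ))) / ε ^ (2*μ)
      = μ - 2*μ * ε ^ (2-μ) + (4 + μ^2)/4 * ε ^ (4-2*μ)
        + μ * ((1 - ε ^ (2-μ)) / (1 - ε ^ (2*μ)))^2 * (1 - ε ^ (4*μ)) := by
  have hμ0 : 0 < μ := by linarith
  have hx : 0 < ε ^ μ := Real.rpow_pos_of_pos hε0 μ
  have hx1 : ε ^ μ < 1 := Real.rpow_lt_one hε0.le hε1 hμ0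
  set x : ℝ := ε ^ μ with hxdef
  have e2μ : ε ^ (2*μ) = x^2 := by rw [two_mul, Real.rpow_add hε0, sq]
  have e4μ : ε ^ (4*μ) = x^2 * x^2 := by
    rw [show 4*μ = 2*μ + 2*μ by ring, Real.rpow_add hε0, e2μ]
  have enμ : ε ^ (-(2*μ)) = (x^2)⁻¹ := by rw [Real.rpow_neg hε0.le, e2μ]
  have eμ2 : ε ^ (μ+2) = x * ε^2 := by
    rw [Real.rpow_add hε0, Real.rpow_two]
  have e2m : ε ^ (2-μ) = ε^2 / x := by
    rw [Real.rpow_sub hε0, Real.rpow_two]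
  have e42 : ε ^ (4-2*μ) = ε ^ (4:ℝ) / x^2 := by
    rw [Real.rpow_sub hε0, e2μ]
  have hxne : x ≠ 0 := hx.ne'
  have hd1 : x⁻¹ - x ≠ 0 := by
    have : 1 < x⁻¹ := (one_lt_inv₀ hx).mpr hx1
    intro h; nlinarith
  have hd2 : 1 - x^2 ≠ 0 := by nlinarith
  have ea : aa μ ε = x * (x - ε^2) / (1 - x^2) := by
    rw [aa, Real.rpow_neg hε0.le]
    rw [div_eq_div_iff hd1 hd2]
    field_simp
    ring
  rw [e2μ, e4μ, enμ, eμ2, e2m, e42, ea]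
  field_simp

lemma tends_rpow {p : ℝ} (hp : 0 < p) :
    Tendsto (fun ε : ℝ => ε ^ p) (nhdsWithin 0 (Ioi 0)) (nhds 0) := by
  have h := (Real.continuousAt_rpow_const 0 p (Or.inr hp.le)).tendsto
  rw [Real.zero_rpow hp.ne'] at h
  exact h.mono_left nhdsWithin_le_nhds

lemma main (hμ2 : 1/2 < μ) (hμ1 : μ < 1) :
    ∃ A > (0:ℝ), Tendsto (fun ε =>
        Real.sqrt (∫ r in Ioo (0:ℝ) 1,
          ((deriv (V μ ε) r - deriv (V0 μ) r) ^ 2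
            + μ ^ 2 / r ^ 2 * (V μ ε r - V0 μ r) ^ 2) * r) / ε ^ μ)
      (nhdsWithin 0 (Ioi 0)) (nhds A) := by
  have hμ0 : 0 < μ := by linarith
  refine ⟨Real.sqrt (2*μ), Real.sqrt_pos.mpr (by linarith), ?_⟩
  set G : ℝ → ℝ := fun ε => μ - 2*μ * ε ^ (2-μ) + (4 + μ^2)/4 * ε ^ (4-2*μ)
        + μ * ((1 - ε ^ (2-μ)) / (1 - ε ^ (2*μ)))^2 * (1 - ε ^ (4*μ)) with hGdef
  have hG : Tendsto G (nhdsWithin 0 (Ioi 0)) (nhds (2*μ)) := by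
    have h : Tendsto G (nhdsWithin 0 (Ioi 0))
        (nhds (μ - 2*μ * 0 + (4 + μ^2)/4 * 0 + μ * ((1 - 0)/(1 - 0))^2 * (1 - 0))) := by
      refine (((tendsto_const_nhds.sub ((tends_rpow (by linarith)).const_mul _)).add
        ((tends_rpow (by linarith)).const_mul _)).add ?_)
      refine Tendsto.mul (Tendsto.const_mul _ (Tendsto.pow ?_ 2))
        (tendsto_const_nhds.sub (tends_rpow (by linarith)))
      exact Tendsto.div (tendsto_const_nhds.sub (tends_rpow (by linarith)))
        (tendsto_const_nhds.sub (tends_rpow (by linarith))) (by norm_num)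
    have hval : μ - 2*μ * 0 + (4 + μ^2)/4 * 0 + μ * ((1 - 0)/(1 - 0))^2 * (1 - 0) = 2*μ := by
      norm_num; ring
    rwa [hval] at h
  refine Tendsto.congr' ?_ ((Real.continuous_sqrt.tendsto (2*μ)).comp hG)
  filter_upwards [Ioo_mem_nhdsGT_of_mem (Set.mem_Ico.mpr ⟨le_refl (0:ℝ), one_pos⟩)]
    with ε hε
  obtain ⟨hε0, hε1⟩ := hε
  have hF := integral_value (μ := μ) (ε := ε) hμ2 hμ1 hε0 hε1
  have hInn : 0 ≤ ∫ r in Ioo (0:ℝ) 1,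
      ((deriv (V μ ε) r - deriv (V0 μ) r) ^ 2
        + μ ^ 2 / r ^ 2 * (V μ ε r - V0 μ r) ^ 2) * r := by
    refine setIntegral_nonneg measurableSet_Ioo (fun r hr => ?_)
    have hr0 : 0 < r := hr.1
    positivity
  have h2μ : ε ^ (2*μ) = (ε ^ μ)^2 := by rw [two_mul, Real.rpow_add hε0, sq]
  show Real.sqrt (G ε) = _
  rw [show (ε:ℝ)^μ = Real.sqrt (ε^(2*μ)) by
      rw [h2μ, Real.sqrt_sq (Real.rpow_nonneg hε0.le μ)],
    ← Real.sqrt_div hInn, hF, ratio_eq hμ2 hμ1 hε0 hε1]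

end S14

/-- With `v₀(r) = r^{π/β} - r²` and `v_ε` the annular-sector solution
(extended by zero on `(0, ε]`), the weighted `H¹` distance satisfies the asymptotics
`(∫₀¹ [(v_ε' - v₀')² + (π²/(β²r²))(v_ε - v₀)²] r dr)^{1/2} = A ε^{π/β}(1 + o(1))`
as `ε → 0⁺`, for some constant `A > 0`. -/
theorem statement14 (β : ℝ) (hβ1 : Real.pi < β) (hβ2 : β < 2 * Real.pi) :
    let μ : ℝ := Real.pi / β
    let v0 : ℝ → ℝ := fun r => r ^ μ - r ^ 2
    let v : ℝ → ℝ → ℝ := fun ε r =>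
      if r ≤ ε then 0 else
        ((ε ^ (-μ) - ε ^ 2) / (ε ^ (-μ) - ε ^ μ)) * r ^ μ
          + ((ε ^ 2 - ε ^ μ) / (ε ^ (-μ) - ε ^ μ)) * r ^ (-μ) - r ^ 2
    ∃ A > (0:ℝ),
      Tendsto (fun ε =>
          Real.sqrt (∫ r in Ioo (0:ℝ) 1,
            ((deriv (v ε) r - deriv v0 r) ^ 2
              + (Real.pi ^ 2 / (β ^ 2 * r ^ 2)) * (v ε r - v0 r) ^ 2) * r)
          / ε ^ μ)
        (nhdsWithin 0 (Ioi 0)) (nhds A) := by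
  intro μ v0 v
  have hβ0 : 0 < β := lt_trans Real.pi_pos hβ1
  have hμ2 : 1/2 < μ := by
    rw [show μ = Real.pi / β from rfl, lt_div_iff₀ hβ0]
    linarith
  have hμ1 : μ < 1 := by
    rw [show μ = Real.pi / β from rfl, div_lt_one hβ0]
    exact hβ1
  obtain ⟨A, hA, hT⟩ := S14.main (μ := μ) hμ2 hμ1
  refine ⟨A, hA, ?_⟩
  have hw : ∀ r : ℝ, Real.pi ^ 2 / (β ^ 2 * r ^ 2) = μ ^ 2 / r ^ 2 := fun r => by
    rw [show (μ:ℝ) = Real.pi / β from rfl, div_pow, div_div]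
  have hfun : (fun ε =>
      Real.sqrt (∫ r in Ioo (0:ℝ) 1,
        ((deriv (v ε) r - deriv v0 r) ^ 2
          + (Real.pi ^ 2 / (β ^ 2 * r ^ 2)) * (v ε r - v0 r) ^ 2) * r) / ε ^ μ)
      = (fun ε =>
      Real.sqrt (∫ r in Ioo (0:ℝ) 1,
        ((deriv (S14.V μ ε) r - deriv (S14.V0 μ) r) ^ 2
          + μ ^ 2 / r ^ 2 * (S14.V μ ε r - S14.V0 μ r) ^ 2) * r) / ε ^ μ) := by
    funext ε
    simp only [hw]
    rfl
  rw [hfun]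
  exact hT
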